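/- If p is a complex polynomial of degree at most 3 such that p(0) ≠ 0, p(1) ≠ 0, p′(0) ≠ 0, p′(1) ≠ 0, N_p(0) = 1, N_p(1) = 0, and p″(0) = 0, then there is a nonzero complex number a with p(z) = a·(z³ − 2z + 2). -/

import Mathlib

open Polynomial

/-- The Newton map of a complex polynomial `p`: `N_p(z) = z - p(z)/p'(z)`. -/
noncomputable def newtonIter (p : Polynomial ℂ) (z : ℂ) : ℂ :=
  z - p.eval z / p.derivative.eval z

/-- If `p` is a complex polynomial of degree at most `3` with `p(0) ≠ 0`, `p(1) ≠ 0`,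
`p'(0) ≠ 0`, `p'(1) ≠ 0`, `N_p(0) = 1`, `N_p(1) = 0` and `p''(0) = 0`, then `p` is a
nonzero scalar multiple of `z³ - 2z + 2`. -/
theorem poly_deg_le_three_superattracting_zero_one_eq_smale
    (p : Polynomial ℂ) (hdeg : p.natDegree ≤ 3)
    (h0 : p.eval 0 ≠ 0) (h1 : p.eval 1 ≠ 0)
    (h0' : p.derivative.eval 0 ≠ 0) (h1' : p.derivative.eval 1 ≠ 0)
    (hN0 : newtonIter p 0 = 1) (hN1 : newtonIter p 1 = 0)
    (h0'' : p.derivative.derivative.eval 0 = 0) :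
    ∃ a : ℂ, a ≠ 0 ∧ p = C a * (X ^ 3 - C 2 * X + C 2) := by
  have hd4 : p.natDegree < 4 := by omega
  have hd3 : p.derivative.natDegree < 4 := by
    have := p.natDegree_derivative_le
    omega
  have h4z : p.coeff 4 = 0 := coeff_eq_zero_of_natDegree_lt (by omega)
  set c0 := p.coeff 0 with hc0
  set c1 := p.coeff 1 with hc1
  set c2 := p.coeff 2 with hc2
  set c3 := p.coeff 3 with hc3
  have he0 : p.eval 0 = c0 := (Polynomial.coeff_zero_eq_eval_zero p).symm
  have he0' : p.derivative.eval 0 = c1 := by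
    rw [← Polynomial.coeff_zero_eq_eval_zero, Polynomial.coeff_derivative]
    simp
    rfl
  have he0'' : p.derivative.derivative.eval 0 = 2 * c2 := by
    rw [← Polynomial.coeff_zero_eq_eval_zero, Polynomial.coeff_derivative,
      Polynomial.coeff_derivative]
    ring
  have he1 : p.eval 1 = c0 + c1 + c2 + c3 := by
    rw [Polynomial.eval_eq_sum_range' hd4]
    simp [Finset.sum_range_succ]
    rfl
  have he1' : p.derivative.eval 1 = c1 + 2 * c2 + 3 * c3 := by
    rw [Polynomial.eval_eq_sum_range' hd3]
    simp [Finset.sum_range_succ, Polynomial.coeff_derivative, h4z]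
    ring
  rw [he0'] at h0'
  rw [he1'] at h1'
  have hc2z : c2 = 0 := by
    rw [he0''] at h0''
    linear_combination h0'' / 2
  have heq1 : c0 = -c1 := by
    unfold newtonIter at hN0
    rw [he0, he0'] at hN0
    field_simp at hN0
    linear_combination -hN0
  have heq2 : c0 + c1 + c2 + c3 = c1 + 2 * c2 + 3 * c3 := by
    unfold newtonIter at hN1
    rw [he1, he1'] at hN1
    have h := sub_eq_zero.mp hN1
    rw [eq_div_iff h1'] at h
    linear_combination -h
  have hc0v : c0 = 2 * c3 := by linear_combination heq2 + hc2z
  have hc1v : c1 = -(2 * c3) := by linear_combination heq1 - hc0v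
  have hc3ne : c3 ≠ 0 := by
    rw [he0, hc0v] at h0
    intro h; apply h0; rw [h]; ring
  refine ⟨c3, hc3ne, ?_⟩
  ext n
  rcases n with _ | _ | _ | _ | n
  · rw [← hc0]
    simp [coeff_X_pow, coeff_C, coeff_X]
    linear_combination hc0v
  · rw [← hc1]
    simp [coeff_X_pow, coeff_C, coeff_X]
    linear_combination hc1v
  · rw [← hc2]
    simpa [coeff_X_pow, coeff_C, coeff_X] using hc2z
  · rw [← hc3]
    simp [coeff_X_pow, coeff_C, coeff_X]
  · rw [Polynomial.coeff_eq_zero_of_natDegree_lt (by omega : p.natDegree < n + 4)]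
    simp [coeff_X_pow, coeff_C, coeff_X]
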